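/- arXiv:1207.5188 — 4 statements merged into one kernel-verified Lean document; each statement's English description precedes it below -/
import Mathlib

section
/- Let f : M → M be a map on a metric space, ζ ∈ M a non-periodic point such that f is continuous at every point of the forward orbit of ζ. Let (U_n) be a sequence of subsets of M with ζ ∈ U_n for all n, such that for every δ > 0 there is N with U_n ⊆ B_δ(ζ) for all n ≥ N. Define R_n = min { j ≥ 1 : ∃ x ∈ U_n, f^j(x) ∈ U_n } (allowing R_n = ∞). Then R_n → ∞ as n → ∞. -/
open Filter Metric

/-- If ζ is non-periodic, f is continuous along the orbit of ζ, and the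
sets U_n (containing ζ) shrink to ζ, then the first return time
R_n = min { j ≥ 1 : ∃ x ∈ U_n, f^[m] x ∈ U_n } (valued in ℕ∞) tends to infinity. -/
theorem firstReturnTime_tendsto_top
    {M : Type*} [MetricSpace M] (f : M → M) (ζ : M)
    (hper : ∀ j : ℕ, 1 ≤ j → f^[j] ζ ≠ ζ)
    (hcont : ∀ k : ℕ, ContinuousAt f (f^[k] ζ))
    (U : ℕ → Set M) (hζU : ∀ n, ζ ∈ U n)
    (hshrink : ∀ δ : ℝ, 0 < δ → ∃ N : ℕ, ∀ n ≥ N, U n ⊆ Metric.ball ζ δ) :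
    Tendsto (fun n : ℕ =>
        sInf {j : ℕ∞ | ∃ m : ℕ, j = (m : ℕ∞) ∧ 1 ≤ m ∧ ∃ x ∈ U n, f^[m] x ∈ U n})
      atTop (nhds ⊤) := by
  -- continuity of iterates at ζ
  have hiter : ∀ m : ℕ, ContinuousAt (f^[m]) ζ := by
    intro m
    induction m with
    | zero => simpa using continuousAt_id
    | succ k ih =>
      rw [Function.iterate_succ']
      exact (hcont k).comp ih
  -- key: a uniform separation radius for all iterates up to K
  have key : ∀ K : ℕ, ∃ δ : ℝ, 0 < δ ∧
      ∀ m : ℕ, 1 ≤ m → m ≤ K → ∀ x : M, dist x ζ < δ → δ ≤ dist (f^[m] x) ζ := by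
    intro K
    induction K with
    | zero => exact ⟨1, one_pos, fun m h1 h0 => by omega⟩
    | succ K ih =>
      obtain ⟨δ, hδ, hsep⟩ := ih
      set ε := dist (f^[K+1] ζ) ζ with hε
      have hεpos : 0 < ε := dist_pos.mpr (hper (K+1) (by omega))
      obtain ⟨δ', hδ', hδ'c⟩ := Metric.continuousAt_iff.mp (hiter (K+1)) (ε/2) (by linarith)
      refine ⟨min δ (min δ' (ε/2)), by positivity, ?_⟩
      intro m h1 hK x hx
      rcases Nat.lt_or_ge m (K+1) with hm | hm
      · exact le_trans (min_le_left _ _)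
          (hsep m h1 (by omega) x (lt_of_lt_of_le hx (min_le_left _ _)))
      · have hmeq : m = K + 1 := by omega
        subst hmeq
        have hx' : dist x ζ < δ' :=
          lt_of_lt_of_le hx (le_trans (min_le_right _ _) (min_le_left _ _))
        have h2 : dist (f^[K+1] x) (f^[K+1] ζ) < ε/2 := hδ'c hx'
        have h3 : ε/2 ≤ dist (f^[K+1] x) ζ := by
          have := dist_triangle (f^[K+1] ζ) (f^[K+1] x) ζ
          rw [dist_comm (f^[K+1] ζ) (f^[K+1] x)] at this
          linarith
        exact le_trans (le_trans (min_le_right _ _) (min_le_right _ _)) h3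
  rw [ENat.tendsto_nhds_top_iff_natCast_lt]
  intro K
  obtain ⟨δ, hδ, hsep⟩ := key K
  obtain ⟨N, hN⟩ := hshrink δ hδ
  filter_upwards [eventually_ge_atTop N] with n hn
  have hsub := hN n hn
  refine lt_of_lt_of_le (show (K:ℕ∞) < ((K+1 : ℕ) : ℕ∞) from Nat.cast_lt.mpr (Nat.lt_succ_self K)) (le_sInf ?_)
  rintro j ⟨m, rfl, h1, x, hxU, hfxU⟩
  have hm : K < m := by
    by_contra hmK
    push_neg at hmK
    have hx : dist x ζ < δ := mem_ball.mp (hsub hxU)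
    have := hsep m h1 hmK x hx
    have := mem_ball.mp (hsub hfxU)
    linarith
  exact_mod_cast hm
end

section
/- Let (a_n) be a sequence of nonnegative reals, (R_n) a sequence in ℕ with R_n → ∞, (k_n) a sequence of positive integers with k_n → ∞, τ > 0, C > 0, and suppose n·a_n → τ. Suppose p_{n,j} ≤ a_n² + C·a_n·j^{-2} for all n, j ≥ 1, where p_{n,j} ≥ 0, and p_{n,j} = 0 for 1 ≤ j < R_n. Then n · Σ_{j=1}^{⌊n/k_n⌋} p_{n,j} → 0 as n → ∞. -/
set_option maxHeartbeats 1000000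

open Filter

/-- quantitative core of condition D′(u_n). -/
theorem Dprime_sum_tendsto_zero
    (a : ℕ → ℝ) (ha : ∀ n, 0 ≤ a n)
    (R : ℕ → ℕ) (hR : Tendsto R atTop atTop)
    (k : ℕ → ℕ) (hkpos : ∀ n, 0 < k n) (hk : Tendsto k atTop atTop)
    (τ C : ℝ) (hτ : 0 < τ) (hC : 0 < C)
    (hna : Tendsto (fun n : ℕ => (n : ℝ) * a n) atTop (nhds τ))
    (p : ℕ → ℕ → ℝ) (hp0 : ∀ n j, 0 ≤ p n j)
    (hbd : ∀ n j, 1 ≤ j → p n j ≤ a n ^ 2 + C * a n / (j : ℝ) ^ 2)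
    (hzero : ∀ n j, 1 ≤ j → j < R n → p n j = 0) :
    Tendsto (fun n : ℕ => (n : ℝ) * ∑ j ∈ Finset.Icc 1 (n / k n), p n j)
      atTop (nhds 0) := by
  set g : ℕ → ℝ := fun n =>
    ((n : ℝ) * a n) ^ 2 * ((k n : ℝ))⁻¹ + ((n : ℝ) * a n) * C * (2 / (R n : ℝ)) with hg
  have hkinv : Tendsto (fun n => ((k n : ℝ))⁻¹) atTop (nhds 0) :=
    (tendsto_natCast_atTop_atTop.comp hk).inv_tendsto_atTop
  have hRinv : Tendsto (fun n => (2 : ℝ) / (R n : ℝ)) atTop (nhds 0) :=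
    tendsto_const_nhds.div_atTop (tendsto_natCast_atTop_atTop.comp hR)
  have hgl : Tendsto g atTop (nhds 0) := by
    have h1 : Tendsto (fun n : ℕ => ((n : ℝ) * a n) ^ 2 * ((k n : ℝ))⁻¹) atTop
        (nhds (τ ^ 2 * 0)) := (hna.pow 2).mul hkinv
    have h2 : Tendsto (fun n : ℕ => ((n : ℝ) * a n) * C * (2 / (R n : ℝ))) atTop
        (nhds (τ * C * 0)) := (hna.mul_const C).mul hRinv
    have := h1.add h2
    simpa using this
  have h0 : ∀ n : ℕ, 0 ≤ (n : ℝ) * ∑ j ∈ Finset.Icc 1 (n / k n), p n j := fun n =>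
    mul_nonneg (Nat.cast_nonneg n) (Finset.sum_nonneg fun j _ => hp0 n j)
  refine squeeze_zero' (Eventually.of_forall h0) ?_ hgl
  filter_upwards [hR.eventually_ge_atTop 1] with n hRn
  set M := n / k n with hM
  have hsub : ∑ j ∈ Finset.Icc 1 M, p n j = ∑ j ∈ Finset.Icc (R n) M, p n j := by
    refine (Finset.sum_subset ?_ ?_).symm
    · exact Finset.Icc_subset_Icc_left hRn
    · intro x hx hnx
      rw [Finset.mem_Icc] at hx
      rw [Finset.mem_Icc, not_and_or, not_le] at hnx
      rcases hnx with h | h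
      · exact hzero n x hx.1 h
      · exact absurd hx.2 h
  have hsum2 : ∑ j ∈ Finset.Icc (R n) M, ((j : ℝ) ^ 2)⁻¹ ≤ 2 / (R n : ℝ) := by
    have hsubset : Finset.Icc (R n) M ⊆ Finset.Ioo (R n - 1) (M + 1) := by
      intro x hx
      rw [Finset.mem_Icc] at hx
      rw [Finset.mem_Ioo]
      exact ⟨lt_of_lt_of_le (Nat.sub_lt hRn one_pos) hx.1, Nat.lt_succ_of_le hx.2⟩
    calc ∑ j ∈ Finset.Icc (R n) M, ((j : ℝ) ^ 2)⁻¹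
        ≤ ∑ j ∈ Finset.Ioo (R n - 1) (M + 1), ((j : ℝ) ^ 2)⁻¹ := by
          refine Finset.sum_le_sum_of_subset_of_nonneg hsubset ?_
          intro i _ _
          positivity
      _ ≤ 2 / ((R n - 1 : ℕ) + 1 : ℝ) := by
          exact_mod_cast sum_Ioo_inv_sq_le (α := ℝ) (R n - 1) (M + 1)
      _ = 2 / (R n : ℝ) := by
          congr 1
          have : (R n - 1) + 1 = R n := Nat.sub_add_cancel hRn
          exact_mod_cast congrArg (Nat.cast (R := ℝ)) this
  have hbound : ∑ j ∈ Finset.Icc (R n) M, p n j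
      ≤ (M : ℝ) * a n ^ 2 + C * a n * (2 / (R n : ℝ)) := by
    calc ∑ j ∈ Finset.Icc (R n) M, p n j
        ≤ ∑ j ∈ Finset.Icc (R n) M, (a n ^ 2 + C * a n * ((j : ℝ) ^ 2)⁻¹) := by
          refine Finset.sum_le_sum fun j hj => ?_
          rw [Finset.mem_Icc] at hj
          have := hbd n j (le_trans hRn hj.1)
          simpa [div_eq_mul_inv] using this
      _ = (Finset.Icc (R n) M).card * a n ^ 2
            + C * a n * ∑ j ∈ Finset.Icc (R n) M, ((j : ℝ) ^ 2)⁻¹ := by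
          rw [Finset.sum_add_distrib, Finset.sum_const, ← Finset.mul_sum]
          ring
      _ ≤ (M : ℝ) * a n ^ 2 + C * a n * (2 / (R n : ℝ)) := by
          gcongr
          · have hcard : (Finset.Icc (R n) M).card ≤ M := by
              rw [Nat.card_Icc]
              calc M + 1 - R n ≤ M + 1 - 1 := Nat.sub_le_sub_left hRn _
                _ = M := Nat.succ_sub_one M
            exact_mod_cast hcard
          · exact mul_nonneg hC.le (ha n)
  rw [hsub]
  calc (n : ℝ) * ∑ j ∈ Finset.Icc (R n) M, p n j
      ≤ (n : ℝ) * ((M : ℝ) * a n ^ 2 + C * a n * (2 / (R n : ℝ))) :=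
        mul_le_mul_of_nonneg_left hbound (Nat.cast_nonneg n)
    _ ≤ g n := by
      have hMle : (M : ℝ) ≤ (n : ℝ) / (k n : ℝ) := Nat.cast_div_le
      have hkpos' : (0 : ℝ) < (k n : ℝ) := by exact_mod_cast hkpos n
      have h1 : (n : ℝ) * ((M : ℝ) * a n ^ 2) ≤ ((n : ℝ) * a n) ^ 2 * ((k n : ℝ))⁻¹ := by
        calc (n : ℝ) * ((M : ℝ) * a n ^ 2) = ((n : ℝ) * a n ^ 2) * (M : ℝ) := by ring
          _ ≤ ((n : ℝ) * a n ^ 2) * ((n : ℝ) / (k n : ℝ)) := by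
              apply mul_le_mul_of_nonneg_left hMle
              positivity
          _ = ((n : ℝ) * a n) ^ 2 * ((k n : ℝ))⁻¹ := by
              field_simp
      calc (n : ℝ) * ((M : ℝ) * a n ^ 2 + C * a n * (2 / (R n : ℝ)))
          = (n : ℝ) * ((M : ℝ) * a n ^ 2) + ((n : ℝ) * a n) * C * (2 / (R n : ℝ)) := by ring
        _ ≤ ((n : ℝ) * a n) ^ 2 * ((k n : ℝ))⁻¹ + ((n : ℝ) * a n) * C * (2 / (R n : ℝ)) := by
            linarith [h1]
        _ = g n := rfl
end

section
/- Let (a_n) be nonnegative reals with n·a_n → τ > 0, (k_n) positive integers with k_n → ∞, (α_n) positive integers with α_n → ∞, and C > 0, η > 1 constants with η^{α_n}/k_n → 0. Suppose p_{n,j} ≤ a_n² + C·a_n·j^{-2} for all j ≥ α_n, and p_{n,j} ≤ C·a_n²·η^{α_n} for all 1 ≤ j < α_n. Then n · Σ_{j=1}^{⌊n/k_n⌋} p_{n,j} → 0 as n → ∞. -/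
open Filter

/-- quantitative core of D′(u_n) in the random setting (Theorem D). -/
theorem Dprime_sum_tendsto_zero_random
    (a : ℕ → ℝ) (ha : ∀ n, 0 ≤ a n)
    (τ : ℝ) (hτ : 0 < τ)
    (hna : Tendsto (fun n : ℕ => (n : ℝ) * a n) atTop (nhds τ))
    (k : ℕ → ℕ) (hkpos : ∀ n, 0 < k n) (hk : Tendsto k atTop atTop)
    (α : ℕ → ℕ) (hαpos : ∀ n, 0 < α n) (hα : Tendsto α atTop atTop)
    (C η : ℝ) (hC : 0 < C) (hη : 1 < η)
    (hηk : Tendsto (fun n : ℕ => η ^ (α n) / (k n : ℝ)) atTop (nhds 0))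
    (p : ℕ → ℕ → ℝ) (hp0 : ∀ n j, 0 ≤ p n j)
    (hlong : ∀ n j, α n ≤ j → p n j ≤ a n ^ 2 + C * a n / (j : ℝ) ^ 2)
    (hshort : ∀ n j, 1 ≤ j → j < α n → p n j ≤ C * a n ^ 2 * η ^ (α n)) :
    Tendsto (fun n : ℕ => (n : ℝ) * ∑ j ∈ Finset.Icc 1 (n / k n), p n j)
      atTop (nhds 0) := by
  -- the dominating sequence
  set g : ℕ → ℝ := fun n =>
    ((n : ℝ) * a n) ^ 2 * (C * (η ^ (α n) / (k n : ℝ)) + 1 / (k n : ℝ))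
      + 4 * C * ((n : ℝ) * a n) * ((α n : ℝ))⁻¹ with hg
  have hgto : Tendsto g atTop (nhds 0) := by
    have hkR : Tendsto (fun n : ℕ => (k n : ℝ)) atTop atTop :=
      tendsto_natCast_atTop_atTop.comp hk
    have hαR : Tendsto (fun n : ℕ => (α n : ℝ)) atTop atTop :=
      tendsto_natCast_atTop_atTop.comp hα
    have h1 : Tendsto (fun n : ℕ => 1 / (k n : ℝ)) atTop (nhds 0) := by
      simpa [Pi.inv_def] using hkR.inv_tendsto_atTop
    have h2 : Tendsto (fun n : ℕ => ((α n : ℝ))⁻¹) atTop (nhds 0) :=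
      hαR.inv_tendsto_atTop
    have t1 : Tendsto (fun n : ℕ => C * (η ^ (α n) / (k n : ℝ))) atTop (nhds (C * 0)) :=
      hηk.const_mul C
    have t3 := (hna.mul hna).mul (t1.add h1)
    have t4 : Tendsto (fun n : ℕ => 4 * C * ((n : ℝ) * a n)) atTop (nhds (4 * C * τ)) :=
      hna.const_mul (4 * C)
    have t5 := t3.add (t4.mul h2)
    have hlim : τ * τ * (C * 0 + 0) + 4 * C * τ * 0 = 0 := by ring
    rw [hlim] at t5
    exact t5.congr fun n => by rw [hg]; ring
  have key : ∀ n : ℕ, (n : ℝ) * ∑ j ∈ Finset.Icc 1 (n / k n), p n j ≤ g n := by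
    intro n
    set N := n / k n with hN
    have haN : 0 ≤ a n := ha n
    -- pointwise bound
    have hpt : ∀ j ∈ Finset.Icc 1 N,
        p n j ≤ (C * a n ^ 2 * η ^ (α n) + a n ^ 2)
          + 4 * C * a n * (((j + α n : ℕ) : ℝ) ^ 2)⁻¹ := by
      intro j hj
      rw [Finset.mem_Icc] at hj
      have hj1 : 1 ≤ j := hj.1
      have hpos : (0:ℝ) < ((j + α n : ℕ) : ℝ) ^ 2 := by
        have : 0 < j + α n := Nat.lt_of_lt_of_le (hαpos n) (Nat.le_add_left _ _)
        positivity
      rcases lt_or_ge j (α n) with h | h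
      · have := hshort n j hj1 h
        have hrest : 0 ≤ a n ^ 2 + 4 * C * a n * (((j + α n : ℕ) : ℝ) ^ 2)⁻¹ := by
          positivity
        linarith
      · have h1 := hlong n j h
        have hηa : 0 ≤ C * a n ^ 2 * η ^ (α n) := by positivity
        have hjR : (0:ℝ) < (j : ℝ) := by exact_mod_cast hj1
        have hjpos : (0:ℝ) < (j : ℝ) ^ 2 := by positivity
        have hsq : ((j + α n : ℕ) : ℝ) ^ 2 ≤ 4 * (j : ℝ) ^ 2 := by
          have hle : (α n : ℝ) ≤ (j : ℝ) := by exact_mod_cast h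
          have hα0 : (0:ℝ) ≤ (α n : ℝ) := Nat.cast_nonneg _
          push_cast
          nlinarith
        have hfrac : ((j : ℝ) ^ 2)⁻¹ ≤ 4 * (((j + α n : ℕ) : ℝ) ^ 2)⁻¹ := by
          have h4 : (1:ℝ) / ((j : ℝ) ^ 2) ≤ 4 / (((j + α n : ℕ) : ℝ) ^ 2) := by
            rw [div_le_div_iff₀ hjpos hpos]
            linarith
          simpa [one_div, div_eq_mul_inv] using h4
        have hmul : C * a n / (j:ℝ)^2 ≤ 4 * C * a n * (((j + α n : ℕ) : ℝ) ^ 2)⁻¹ := by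
          rw [div_eq_mul_inv]
          calc C * a n * ((j:ℝ)^2)⁻¹ ≤ C * a n * (4 * (((j + α n : ℕ) : ℝ) ^ 2)⁻¹) :=
                mul_le_mul_of_nonneg_left hfrac (by positivity)
            _ = 4 * C * a n * (((j + α n : ℕ) : ℝ) ^ 2)⁻¹ := by ring
        linarith
    -- tail sum bound
    have htail : ∑ j ∈ Finset.Icc 1 N, (((j + α n : ℕ) : ℝ) ^ 2)⁻¹ ≤ ((α n : ℝ))⁻¹ := by
      have hre : ∑ j ∈ Finset.Icc 1 N, (((j + α n : ℕ) : ℝ) ^ 2)⁻¹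
          = ∑ m ∈ Finset.Ioc (α n) (N + α n), ((m : ℝ) ^ 2)⁻¹ := by
        apply Finset.sum_nbij' (fun j => j + α n) (fun m => m - α n)
        · intro j hj
          rw [Finset.mem_Icc] at hj
          rw [Finset.mem_Ioc]
          omega
        · intro m hm
          rw [Finset.mem_Ioc] at hm
          rw [Finset.mem_Icc]
          omega
        · intro j hj; omega
        · intro m hm; rw [Finset.mem_Ioc] at hm; omega
        · intro j hj; rfl
      rw [hre]
      have hα0 : α n ≠ 0 := (hαpos n).ne'
      have h := sum_Ioc_inv_sq_le_sub (α := ℝ) hα0 (Nat.le_add_left (α n) N)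
      have hnn : (0:ℝ) ≤ ((N + α n : ℕ) : ℝ)⁻¹ := by positivity
      linarith
    have hcard : (Finset.Icc 1 N).card = N := by rw [Nat.card_Icc, Nat.add_sub_cancel]
    calc (n : ℝ) * ∑ j ∈ Finset.Icc 1 N, p n j
        ≤ (n : ℝ) * ∑ j ∈ Finset.Icc 1 N,
            ((C * a n ^ 2 * η ^ (α n) + a n ^ 2)
              + 4 * C * a n * (((j + α n : ℕ) : ℝ) ^ 2)⁻¹) := by
          exact mul_le_mul_of_nonneg_left (Finset.sum_le_sum hpt) (Nat.cast_nonneg n)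
      _ = (n : ℝ) * ((N : ℝ) * (C * a n ^ 2 * η ^ (α n) + a n ^ 2)
            + 4 * C * a n * ∑ j ∈ Finset.Icc 1 N, (((j + α n : ℕ) : ℝ) ^ 2)⁻¹) := by
          rw [Finset.sum_add_distrib, Finset.sum_const, hcard, nsmul_eq_mul, ← Finset.mul_sum]
      _ ≤ (n : ℝ) * ((N : ℝ) * (C * a n ^ 2 * η ^ (α n) + a n ^ 2)
            + 4 * C * a n * ((α n : ℝ))⁻¹) := by
          apply mul_le_mul_of_nonneg_left _ (Nat.cast_nonneg n)
          have : 4 * C * a n * ∑ j ∈ Finset.Icc 1 N, (((j + α n : ℕ) : ℝ) ^ 2)⁻¹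
              ≤ 4 * C * a n * ((α n : ℝ))⁻¹ :=
            mul_le_mul_of_nonneg_left htail (by positivity)
          linarith
      _ ≤ g n := by
          have hNle : (N : ℝ) ≤ (n : ℝ) / (k n : ℝ) := by
            rw [le_div_iff₀ (by exact_mod_cast hkpos n)]
            exact_mod_cast Nat.div_mul_le_self n (k n)
          have hkpos' : (0:ℝ) < (k n : ℝ) := by exact_mod_cast hkpos n
          have hterm : (0:ℝ) ≤ C * a n ^ 2 * η ^ (α n) + a n ^ 2 := by positivity
          have h1 : (n : ℝ) * ((N : ℝ) * (C * a n ^ 2 * η ^ (α n) + a n ^ 2))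
              ≤ (n : ℝ) * (((n : ℝ) / (k n : ℝ)) * (C * a n ^ 2 * η ^ (α n) + a n ^ 2)) := by
            apply mul_le_mul_of_nonneg_left _ (Nat.cast_nonneg n)
            exact mul_le_mul_of_nonneg_right hNle hterm
          have heq : (n : ℝ) * (((n : ℝ) / (k n : ℝ)) * (C * a n ^ 2 * η ^ (α n) + a n ^ 2))
              + (n : ℝ) * (4 * C * a n * ((α n : ℝ))⁻¹) = g n := by
            rw [hg]
            field_simp
          calc (n : ℝ) * ((N : ℝ) * (C * a n ^ 2 * η ^ (α n) + a n ^ 2)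
                + 4 * C * a n * ((α n : ℝ))⁻¹)
              = (n : ℝ) * ((N : ℝ) * (C * a n ^ 2 * η ^ (α n) + a n ^ 2))
                + (n : ℝ) * (4 * C * a n * ((α n : ℝ))⁻¹) := by ring
            _ ≤ g n := by rw [← heq]; linarith
  have hnonneg : ∀ n : ℕ, 0 ≤ (n : ℝ) * ∑ j ∈ Finset.Icc 1 (n / k n), p n j := by
    intro n
    apply mul_nonneg (Nat.cast_nonneg n)
    exact Finset.sum_nonneg fun j _ => hp0 n j
  exact squeeze_zero hnonneg key hgto
end

section
/- Let (Ω, F, P, T) be a measure preserving system, and suppose there exist a constant C* > 0 and a sequence of events (U_n) with nP(U_n) → τ > 0 such that P(U_n ∩ T^{-j}U_n) ≤ P(U_n)² + C*·P(U_n)·j^{-2} for all j, n ≥ 1. Suppose moreover U_n ∩ T^{-j}U_n = ∅ for 1 ≤ j < R_n where R_n → ∞. Then for any sequence k_n → ∞, lim_{n→∞} n Σ_{j=1}^{⌊n/k_n⌋} P(U_n ∩ T^{-j}U_n) = 0. -/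
open Filter MeasureTheory

private lemma tail_sum_le (R m : ℕ) (hR : 1 ≤ R) :
    ∑ j ∈ Finset.Icc R m, (1:ℝ)/(j:ℝ)^2 ≤ 2/(R:ℝ) := by
  have hRpos : (0:ℝ) < (R:ℝ) := by exact_mod_cast hR
  rcases le_or_gt R m with h | h
  · calc ∑ j ∈ Finset.Icc R m, (1:ℝ)/(j:ℝ)^2
        ≤ ∑ j ∈ Finset.Icc R m, (2/(j:ℝ) - 2/((j:ℝ)+1)) := by
          apply Finset.sum_le_sum
          intro j hj
          have hj1 : 1 ≤ j := le_trans hR (Finset.mem_Icc.mp hj).1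
          have hj' : (1:ℝ) ≤ (j:ℝ) := by exact_mod_cast hj1
          have h0 : (0:ℝ) < (j:ℝ) := by linarith
          rw [div_sub_div _ _ (ne_of_gt h0) (by positivity),
            div_le_div_iff₀ (by positivity) (by positivity)]
          nlinarith
      _ ≤ 2/(R:ℝ) := by
          rw [← Finset.Ico_add_one_right_eq_Icc, Finset.sum_Ico_eq_sum_range]
          have key := Finset.sum_range_sub (fun i : ℕ => -(2/((R:ℝ)+i))) (m + 1 - R)
          have heq : ∀ i : ℕ, (2/((R+i:ℕ):ℝ) - 2/(((R+i:ℕ):ℝ)+1))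
              = (fun i : ℕ => -(2/((R:ℝ)+i))) (i+1) - (fun i : ℕ => -(2/((R:ℝ)+i))) i := by
            intro i; push_cast; ring
          rw [Finset.sum_congr rfl (fun i _ => heq i), key]
          have hcast : ((R:ℝ) + ((m + 1 - R : ℕ):ℝ)) = ((m:ℝ)+1) := by
            rw [Nat.cast_sub (by omega : R ≤ m + 1)]
            push_cast
            ring
          simp only [Nat.cast_zero, add_zero, hcast]
          have hm1 : (0:ℝ) < (m:ℝ) + 1 := by positivity
          have : 0 ≤ 2/((m:ℝ)+1) := by positivity
          linarith
  · rw [Finset.Icc_eq_empty (by omega)]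
    simp
    positivity

/-- abstract form of the proof of condition D′(u_n) in Theorem A:
under the correlation bound P(U_n ∩ T^{-j}U_n) ≤ P(U_n)² + C*·P(U_n)·j^{-2}, with
nP(U_n) → τ > 0 and first return times R_n → ∞ (U_n ∩ T^{-j}U_n = ∅ for 1 ≤ j < R_n),
the D′ sum n Σ_{j=1}^{⌊n/k_n⌋} P(U_n ∩ T^{-j}U_n) tends to 0. -/
theorem Dprime_holds_of_decay
    {Ω : Type*} [MeasurableSpace Ω] (P : Measure Ω) [IsProbabilityMeasure P]
    (T : Ω → Ω) (hT : MeasurePreserving T P P)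
    (Cstar τ : ℝ) (hC : 0 < Cstar) (hτ : 0 < τ)
    (U : ℕ → Set Ω) (hUm : ∀ n, MeasurableSet (U n))
    (hna : Tendsto (fun n : ℕ => (n : ℝ) * (P (U n)).toReal) atTop (nhds τ))
    (hcorr : ∀ n j : ℕ, 1 ≤ j →
      (P (U n ∩ T^[j] ⁻¹' U n)).toReal
        ≤ (P (U n)).toReal ^ 2 + Cstar * (P (U n)).toReal / (j : ℝ) ^ 2)
    (R : ℕ → ℕ) (hR : Tendsto R atTop atTop)
    (hdisj : ∀ n j : ℕ, 1 ≤ j → j < R n → U n ∩ T^[j] ⁻¹' U n = ∅)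
    (k : ℕ → ℕ) (hkpos : ∀ n, 0 < k n) (hk : Tendsto k atTop atTop) :
    Tendsto (fun n : ℕ =>
        (n : ℝ) * ∑ j ∈ Finset.Icc 1 (n / k n), (P (U n ∩ T^[j] ⁻¹' U n)).toReal)
      atTop (nhds 0) := by
  set p : ℕ → ℝ := fun n => (P (U n)).toReal with hpdef
  set R' : ℕ → ℕ := fun n => max (R n) 1 with hR'def
  have hR'pos : ∀ n, 1 ≤ R' n := fun n => le_max_right _ _
  have hR'top : Tendsto R' atTop atTop :=
    tendsto_atTop_mono (fun n => le_max_left _ _) hR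
  have hp0 : ∀ n, 0 ≤ p n := fun n => ENNReal.toReal_nonneg
  have key : ∀ n : ℕ,
      (n:ℝ) * ∑ j ∈ Finset.Icc 1 (n / k n), (P (U n ∩ T^[j] ⁻¹' U n)).toReal
      ≤ ((n:ℝ) * p n)^2 / (k n) + 2 * Cstar * ((n:ℝ) * p n) / (R' n) := by
    intro n
    set m := n / k n with hmdef
    have hsum : ∑ j ∈ Finset.Icc 1 m, (P (U n ∩ T^[j] ⁻¹' U n)).toReal
        ≤ (m:ℝ) * p n ^ 2 + Cstar * p n * (2 / (R' n : ℝ)) := by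
      calc ∑ j ∈ Finset.Icc 1 m, (P (U n ∩ T^[j] ⁻¹' U n)).toReal
          ≤ ∑ j ∈ Finset.Icc 1 m,
              (p n ^ 2 + (if R' n ≤ j then Cstar * p n / (j:ℝ)^2 else 0)) := by
            apply Finset.sum_le_sum
            intro j hj
            obtain ⟨hj1, hjm⟩ := Finset.mem_Icc.mp hj
            by_cases hcase : R' n ≤ j
            · simp only [if_pos hcase]
              exact hcorr n j hj1
            · simp only [if_neg hcase]
              have hjR : j < R n := by
                have hx : j < max (R n) 1 := lt_of_not_ge hcase
                omega
              rw [hdisj n j hj1 hjR]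
              have : (P (∅ : Set Ω)).toReal = 0 := by simp
              rw [this]
              have := sq_nonneg (p n)
              linarith
        _ = (m:ℝ) * p n ^ 2
              + ∑ j ∈ Finset.Icc 1 m, (if R' n ≤ j then Cstar * p n / (j:ℝ)^2 else 0) := by
            rw [Finset.sum_add_distrib, Finset.sum_const, Nat.card_Icc]
            simp [nsmul_eq_mul]
        _ ≤ (m:ℝ) * p n ^ 2 + Cstar * p n * (2 / (R' n : ℝ)) := by
            have hfilter : Finset.filter (fun j => R' n ≤ j) (Finset.Icc 1 m)
                = Finset.Icc (R' n) m := by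
              ext j
              simp only [Finset.mem_filter, Finset.mem_Icc]
              have := hR'pos n
              omega
            rw [← Finset.sum_filter, hfilter]
            have : ∑ j ∈ Finset.Icc (R' n) m, Cstar * p n / (j:ℝ)^2
                = Cstar * p n * ∑ j ∈ Finset.Icc (R' n) m, (1:ℝ)/(j:ℝ)^2 := by
              rw [Finset.mul_sum]
              apply Finset.sum_congr rfl
              intro j _
              ring
            rw [this]
            have htail := tail_sum_le (R' n) m (hR'pos n)
            have hcp : 0 ≤ Cstar * p n := mul_nonneg hC.le (hp0 n)
            have := mul_le_mul_of_nonneg_left htail hcp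
            linarith
    have hm : ((m:ℕ):ℝ) ≤ (n:ℝ) / (k n : ℝ) := Nat.cast_div_le
    calc (n:ℝ) * ∑ j ∈ Finset.Icc 1 m, (P (U n ∩ T^[j] ⁻¹' U n)).toReal
        ≤ (n:ℝ) * ((m:ℝ) * p n ^ 2 + Cstar * p n * (2 / (R' n : ℝ))) :=
          mul_le_mul_of_nonneg_left hsum (Nat.cast_nonneg n)
      _ ≤ (n:ℝ) * (((n:ℝ)/(k n : ℝ)) * p n ^ 2 + Cstar * p n * (2 / (R' n : ℝ))) := by
          apply mul_le_mul_of_nonneg_left _ (Nat.cast_nonneg n)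
          gcongr
      _ = ((n:ℝ) * p n)^2 / (k n) + 2 * Cstar * ((n:ℝ) * p n) / (R' n) := by ring
  have hnonneg : ∀ n : ℕ,
      0 ≤ (n:ℝ) * ∑ j ∈ Finset.Icc 1 (n / k n), (P (U n ∩ T^[j] ⁻¹' U n)).toReal := by
    intro n
    exact mul_nonneg (Nat.cast_nonneg n)
      (Finset.sum_nonneg fun j _ => ENNReal.toReal_nonneg)
  have hk' : Tendsto (fun n : ℕ => ((k n : ℕ):ℝ)) atTop atTop :=
    tendsto_natCast_atTop_atTop.comp hk
  have hR'' : Tendsto (fun n : ℕ => ((R' n : ℕ):ℝ)) atTop atTop :=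
    tendsto_natCast_atTop_atTop.comp hR'top
  have hg1 : Tendsto (fun n : ℕ => ((n:ℝ) * p n)^2 / (k n : ℝ)) atTop (nhds 0) :=
    Tendsto.div_atTop (hna.pow 2) hk'
  have hg2 : Tendsto (fun n : ℕ => 2 * Cstar * ((n:ℝ) * p n) / (R' n : ℝ)) atTop (nhds 0) :=
    Tendsto.div_atTop (hna.const_mul (2 * Cstar)) hR''
  have hg : Tendsto (fun n : ℕ =>
      ((n:ℝ) * p n)^2 / (k n : ℝ) + 2 * Cstar * ((n:ℝ) * p n) / (R' n : ℝ)) atTop (nhds 0) := by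
    simpa using hg1.add hg2
  exact squeeze_zero hnonneg key hg
end
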